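/- There exists a universal constant C > 0 with the following property. Let G = (V,E) be a finite connected d-regular simple graph on n vertices with d ≥ 3, and suppose G has absolute multiplicative spectral gap γ for some 0 < γ < 1. Then for every real α > 1 there exists a subset B ⊆ V with |B| ≥ n^(1 − C·log d/(α·log(1/γ))) and a real r > 0 such that r ≤ d_G(u,v) ≤ α·r for all distinct u,v ∈ B. -/

import Mathlib

/-- A `d`-regular graph `G` has absolute multiplicative spectral gap `γ`:
`‖Av‖₂ ≤ γ·d·‖v‖₂` for every vector `v` orthogonal to the all-ones vector. -/
def HasAbsSpectralGap {V : Type} [Fintype V] [DecidableEq V]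
    (G : SimpleGraph V) [DecidableRel G.Adj] (d : ℕ) (γ : ℝ) : Prop :=
  ∀ v : V → ℝ, (∑ u, v u) = 0 →
    ∑ u, ((G.adjMatrix ℝ).mulVec v u) ^ 2 ≤ (γ * d) ^ 2 * ∑ u, (v u) ^ 2

set_option linter.unusedSectionVars false

open Finset Matrix SimpleGraph Real

section Helpers

variable {V : Type} [Fintype V] [DecidableEq V] (G : SimpleGraph V) [DecidableRel G.Adj]
variable {d : ℕ} {γ : ℝ}

lemma row_sum_adj (hreg : G.IsRegularOfDegree d) (x : V) :
    ∑ y : V, G.adjMatrix ℝ x y = d := by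
  have := SimpleGraph.adjMatrix_mulVec_const_apply_of_regular (α := ℝ) (a := (1:ℝ)) hreg (v := x)
  simpa [Matrix.mulVec, dotProduct] using this

lemma col_sum_adj (hreg : G.IsRegularOfDegree d) (y : V) :
    ∑ x : V, G.adjMatrix ℝ x y = d := by
  rw [← row_sum_adj G hreg y]
  apply Finset.sum_congr rfl
  intro x _
  simp [SimpleGraph.adjMatrix_apply, SimpleGraph.adj_comm]

lemma sum_adj_mulVec (hreg : G.IsRegularOfDegree d) (v : V → ℝ) :
    ∑ u, (G.adjMatrix ℝ *ᵥ v) u = d * ∑ u, v u := by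
  simp only [Matrix.mulVec, dotProduct]
  rw [Finset.sum_comm, Finset.mul_sum]
  apply Finset.sum_congr rfl
  intro y _
  rw [← Finset.sum_mul, col_sum_adj G hreg y]

lemma sum_pow_mulVec (hreg : G.IsRegularOfDegree d) (k : ℕ) (v : V → ℝ) :
    ∑ u, ((G.adjMatrix ℝ ^ k) *ᵥ v) u = (d:ℝ)^k * ∑ u, v u := by
  induction k with
  | zero => simp [Matrix.one_mulVec]
  | succ k ih =>
      rw [pow_succ', ← Matrix.mulVec_mulVec, sum_adj_mulVec G hreg, ih]
      ring

lemma gap_pow (hreg : G.IsRegularOfDegree d) (hgap : HasAbsSpectralGap G d γ)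
    (k : ℕ) (v : V → ℝ) (hv : ∑ u, v u = 0) :
    ∑ u, ((G.adjMatrix ℝ ^ k) *ᵥ v) u ^ 2 ≤ ((γ * d) ^ 2) ^ k * ∑ u, (v u) ^ 2 := by
  induction k with
  | zero => simp [Matrix.one_mulVec]
  | succ k ih =>
      rw [pow_succ', ← Matrix.mulVec_mulVec]
      have hzero : ∑ u, ((G.adjMatrix ℝ ^ k) *ᵥ v) u = 0 := by
        rw [sum_pow_mulVec G hreg, hv, mul_zero]
      calc ∑ u, (G.adjMatrix ℝ *ᵥ ((G.adjMatrix ℝ ^ k) *ᵥ v)) u ^ 2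
          ≤ (γ * d) ^ 2 * ∑ u, ((G.adjMatrix ℝ ^ k) *ᵥ v) u ^ 2 := hgap _ hzero
        _ ≤ (γ * d) ^ 2 * (((γ * d) ^ 2) ^ k * ∑ u, (v u) ^ 2) := by
            exact mul_le_mul_of_nonneg_left ih (sq_nonneg _)
        _ = ((γ * d) ^ 2) ^ (k+1) * ∑ u, (v u) ^ 2 := by ring

lemma pow_mulVec_const (hreg : G.IsRegularOfDegree d) (k : ℕ) (c : ℝ) :
    (G.adjMatrix ℝ ^ k) *ᵥ (Function.const V c) = Function.const V ((d:ℝ)^k * c) := by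
  induction k with
  | zero => simp [Matrix.one_mulVec]
  | succ k ih =>
      rw [pow_succ', ← Matrix.mulVec_mulVec, ih]
      funext x
      rw [SimpleGraph.adjMatrix_mulVec_const_apply_of_regular hreg]
      simp [Function.const]
      ring

lemma dist_le_of_gap (hconn : G.Connected) (hreg : G.IsRegularOfDegree d)
    (hd : 3 ≤ d) (hγ0 : 0 < γ) (hgap : HasAbsSpectralGap G d γ)
    (k : ℕ) (hk : γ ^ k * (Fintype.card V : ℝ) < 1) (u v : V) : G.dist u v ≤ k := by
  have : Nonempty V := hconn.nonempty
  set n : ℕ := Fintype.card V with hn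
  have hnpos : 0 < (n:ℝ) := by exact_mod_cast Fintype.card_pos
  set w : V → ℝ := fun x => (if x = u then (1:ℝ) else 0) - 1/n with hw
  have hwsum : ∑ x, w x = 0 := by
    simp only [hw, Finset.sum_sub_distrib, Finset.sum_ite_eq', Finset.mem_univ, if_true,
      Finset.sum_const, Finset.card_univ, nsmul_eq_mul]
    field_simp
    rw [← hn]; ring
  have hwsq : ∑ x, (w x) ^ 2 ≤ 1 := by
    have expand : ∀ x : V, (w x) ^ 2 =
        (if x = u then (1:ℝ) else 0) * (1 - 2/n) + 1/n^2 := by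
      intro x
      by_cases h : x = u <;> simp only [hw, h, if_true, if_false] <;> field_simp <;> ring
    rw [Finset.sum_congr rfl (fun x _ => expand x)]
    rw [Finset.sum_add_distrib, ← Finset.sum_mul, Finset.sum_ite_eq', Finset.sum_const]
    simp only [Finset.mem_univ, if_true, Finset.card_univ, nsmul_eq_mul, ← hn]
    have h1 : (1:ℝ)/n ≤ 1 := by
      rw [div_le_one hnpos]; exact_mod_cast Fintype.card_pos
    have : (n:ℝ) * (1/n^2) = 1/n := by field_simp
    rw [this]
    have h0 : 0 ≤ 1/(n:ℝ) := by positivity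
    have h2 : (2:ℝ)/n = 2*(1/n) := by ring
    linarith
  set y : V → ℝ := (G.adjMatrix ℝ ^ k) *ᵥ w with hy
  have hysq : (y v) ^ 2 ≤ ((γ * d) ^ k) ^ 2 := by
    have h1 : (y v) ^ 2 ≤ ∑ x, (y x) ^ 2 :=
      Finset.single_le_sum (f := fun x => (y x)^2) (fun x _ => sq_nonneg _) (Finset.mem_univ v)
    have h2 := gap_pow G hreg hgap k w hwsum
    calc (y v)^2 ≤ ∑ x, (y x)^2 := h1
      _ ≤ ((γ * d) ^ 2) ^ k * ∑ x, (w x) ^ 2 := h2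
      _ ≤ ((γ * d) ^ 2) ^ k * 1 := by
          apply mul_le_mul_of_nonneg_left hwsq
          positivity
      _ = ((γ * d) ^ k) ^ 2 := by rw [mul_one, ← pow_mul, ← pow_mul, Nat.mul_comm]
  have hyge : -((γ * d) ^ k) ≤ y v := by
    have hc : 0 ≤ (γ * d) ^ k := by positivity
    nlinarith [sq_nonneg (y v + (γ * d) ^ k)]
  have hyval : y v = (G.adjMatrix ℝ ^ k) v u - (d:ℝ)^k / n := by
    have hsplit : w = (fun x => if x = u then (1:ℝ) else 0) - Function.const V ((1:ℝ)/n) := by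
      funext x; simp [hw, Function.const]
    rw [hy, hsplit, Matrix.mulVec_sub, pow_mulVec_const G hreg]
    have : ((G.adjMatrix ℝ ^ k) *ᵥ (fun x => if x = u then (1:ℝ) else 0)) v
        = (G.adjMatrix ℝ ^ k) v u := by
      simp only [Matrix.mulVec, dotProduct, mul_ite, mul_one, mul_zero]
      rw [Finset.sum_ite_eq']
      simp
    simp only [Pi.sub_apply, this, Function.const]
    ring
  have hdpos : (0:ℝ) < (d:ℝ)^k := by
    have : (0:ℝ) < d := by exact_mod_cast lt_of_lt_of_le (by norm_num) hd
    positivity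
  have hentry : 0 < (G.adjMatrix ℝ ^ k) v u := by
    have h1 : (d:ℝ)^k / n - (γ * d)^k ≤ (G.adjMatrix ℝ ^ k) v u := by
      rw [hyval] at hyge; linarith
    have h2 : (γ * d)^k = γ^k * (d:ℝ)^k := by rw [mul_pow]
    have h3 : γ^k < 1/(n:ℝ) := by
      rw [lt_div_iff₀ hnpos]; simpa using hk
    have h4 : γ^k * (d:ℝ)^k < (d:ℝ)^k / n := by
      rw [div_eq_mul_inv, mul_comm ((d:ℝ)^k) (n:ℝ)⁻¹, ← one_div]
      exact mul_lt_mul_of_pos_right h3 hdpos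
    rw [h2] at h1
    linarith
  rw [SimpleGraph.adjMatrix_pow_apply_eq_card_walk] at hentry
  have hcard : 0 < Fintype.card {p : G.Walk v u | p.length = k} := by exact_mod_cast hentry
  obtain ⟨⟨p, hp⟩⟩ := Fintype.card_pos_iff.mp hcard
  rw [SimpleGraph.dist_comm]
  calc G.dist v u ≤ p.length := SimpleGraph.dist_le p
    _ = k := hp

lemma walk_cons_decomp {a b : V} {t : ℕ} (p : G.Walk a b) (hp : p.length = t + 1) :
    ∃ z, G.Adj a z ∧ ∃ q : G.Walk z b, q.length = t := by
  cases p with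
  | nil => simp at hp
  | cons ha q => exact ⟨_, ha, q, by simpa using hp⟩

lemma M_row_sum (hreg : G.IsRegularOfDegree d) (t : ℕ) (x : V) :
    ∑ y, ((G.adjMatrix ℝ + 1) ^ t) x y = ((d:ℝ) + 1) ^ t := by
  induction t generalizing x with
  | zero => simp [Matrix.one_apply, Finset.sum_ite_eq']
  | succ t ih =>
      rw [pow_succ']
      simp only [Matrix.mul_apply]
      rw [Finset.sum_comm]
      have : ∀ z : V, ∑ y, (G.adjMatrix ℝ + 1) x z * ((G.adjMatrix ℝ + 1) ^ t) z y
          = (G.adjMatrix ℝ + 1) x z * ((d:ℝ) + 1) ^ t := by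
        intro z; rw [← Finset.mul_sum, ih z]
      rw [Finset.sum_congr rfl (fun z _ => this z), ← Finset.sum_mul]
      have hrow : ∑ z, (G.adjMatrix ℝ + 1) x z = (d:ℝ) + 1 := by
        simp only [Matrix.add_apply]
        rw [Finset.sum_add_distrib, row_sum_adj G hreg x]
        simp [Matrix.one_apply, Finset.sum_ite_eq']
      rw [hrow, pow_succ]
      ring

lemma Mpow_nonneg (t : ℕ) (x y : V) : 0 ≤ ((G.adjMatrix ℝ + 1) ^ t) x y := by
  induction t generalizing x y with
  | zero =>
      simp only [pow_zero, Matrix.one_apply]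
      split <;> norm_num
  | succ t ih =>
      rw [pow_succ, Matrix.mul_apply]
      apply Finset.sum_nonneg
      intro z _
      apply mul_nonneg (ih x z)
      simp only [Matrix.add_apply, Matrix.one_apply, SimpleGraph.adjMatrix_apply]
      split <;> split <;> norm_num

lemma Mpow_entry_ge (hconn : G.Connected) (t : ℕ) :
    ∀ b v : V, G.dist b v ≤ t → 1 ≤ ((G.adjMatrix ℝ + 1) ^ t) b v := by
  induction t with
  | zero =>
      intro b v hbv
      have : b = v := (hconn.dist_eq_zero_iff).mp (Nat.le_zero.mp hbv)
      subst this
      simp [Matrix.one_apply]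
  | succ t ih =>
      intro b v hbv
      by_cases h : G.dist b v ≤ t
      · have hterm : 1 ≤ ((G.adjMatrix ℝ + 1) ^ t) b v * (G.adjMatrix ℝ + 1) v v := by
          have h2 : (G.adjMatrix ℝ + 1) v v = 1 := by
            simp [Matrix.add_apply, Matrix.one_apply]
          rw [h2, mul_one]
          exact ih b v h
        rw [pow_succ, Matrix.mul_apply]
        calc (1:ℝ) ≤ ((G.adjMatrix ℝ + 1) ^ t) b v * (G.adjMatrix ℝ + 1) v v := hterm
          _ ≤ ∑ z, ((G.adjMatrix ℝ + 1) ^ t) b z * (G.adjMatrix ℝ + 1) z v := by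
              apply Finset.single_le_sum
                (f := fun z => ((G.adjMatrix ℝ + 1) ^ t) b z * (G.adjMatrix ℝ + 1) z v)
                _ (Finset.mem_univ v)
              intro z _
              apply mul_nonneg (Mpow_nonneg G t b z)
              simp only [Matrix.add_apply, Matrix.one_apply, SimpleGraph.adjMatrix_apply]
              split <;> split <;> norm_num
      · have hdist : G.dist b v = t + 1 := le_antisymm hbv (Nat.succ_le_of_lt (Nat.lt_of_not_le h))
        obtain ⟨p, hp⟩ := hconn.exists_walk_length_eq_dist b v
        have hrev : p.reverse.length = t + 1 := by rw [SimpleGraph.Walk.length_reverse, hp, hdist]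
        obtain ⟨z, hadj, q, hq⟩ := walk_cons_decomp G p.reverse hrev
        have hbz : G.dist b z ≤ t := by
          calc G.dist b z ≤ q.reverse.length := SimpleGraph.dist_le q.reverse
            _ = t := by rw [SimpleGraph.Walk.length_reverse, hq]
        have hterm : 1 ≤ ((G.adjMatrix ℝ + 1) ^ t) b z * (G.adjMatrix ℝ + 1) z v := by
          have h2 : (G.adjMatrix ℝ + 1) z v = 1 := by
            have hzv : G.Adj z v := hadj.symm
            simp [Matrix.add_apply, Matrix.one_apply, SimpleGraph.adjMatrix_apply, hzv, hzv.ne]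
          rw [h2, mul_one]
          exact ih b z hbz
        rw [pow_succ, Matrix.mul_apply]
        calc (1:ℝ) ≤ ((G.adjMatrix ℝ + 1) ^ t) b z * (G.adjMatrix ℝ + 1) z v := hterm
          _ ≤ ∑ x, ((G.adjMatrix ℝ + 1) ^ t) b x * (G.adjMatrix ℝ + 1) x v := by
              apply Finset.single_le_sum
                (f := fun x => ((G.adjMatrix ℝ + 1) ^ t) b x * (G.adjMatrix ℝ + 1) x v)
                _ (Finset.mem_univ z)
              intro x _
              apply mul_nonneg (Mpow_nonneg G t b x)
              simp only [Matrix.add_apply, Matrix.one_apply, SimpleGraph.adjMatrix_apply]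
              split <;> split <;> norm_num

lemma ball_card_le (hconn : G.Connected) (hreg : G.IsRegularOfDegree d) (t : ℕ) (b : V) :
    ((Finset.univ.filter (fun v => G.dist b v ≤ t)).card : ℝ) ≤ ((d:ℝ) + 1) ^ t := by
  have h1 : ((Finset.univ.filter (fun v => G.dist b v ≤ t)).card : ℝ)
      = ∑ v ∈ Finset.univ.filter (fun v => G.dist b v ≤ t), (1:ℝ) := by
    simp
  rw [h1]
  calc ∑ v ∈ Finset.univ.filter (fun v => G.dist b v ≤ t), (1:ℝ)
      ≤ ∑ v ∈ Finset.univ.filter (fun v => G.dist b v ≤ t), ((G.adjMatrix ℝ + 1) ^ t) b v := by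
        apply Finset.sum_le_sum
        intro v hv
        exact Mpow_entry_ge G hconn t b v (Finset.mem_filter.mp hv).2
    _ ≤ ∑ v, ((G.adjMatrix ℝ + 1) ^ t) b v := by
        apply Finset.sum_le_sum_of_subset_of_nonneg (Finset.filter_subset _ _)
        intro v _ _
        exact Mpow_nonneg G t b v
    _ = ((d:ℝ) + 1) ^ t := M_row_sum G hreg t b

lemma exists_net (hconn : G.Connected) (m : ℕ) (hm : 1 ≤ m) :
    ∃ B : Finset V, (∀ u ∈ B, ∀ v ∈ B, u ≠ v → m ≤ G.dist u v) ∧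
      ∀ v : V, ∃ b ∈ B, G.dist b v ≤ m - 1 := by
  classical
  set s : Finset (Finset V) := Finset.univ.filter
    (fun B => ∀ u ∈ B, ∀ v ∈ B, u ≠ v → m ≤ G.dist u v) with hs
  have hsne : s.Nonempty := ⟨∅, by simp [hs]⟩
  obtain ⟨B, hBs, hBmax⟩ := Finset.exists_max_image s Finset.card hsne
  have hBsep : ∀ u ∈ B, ∀ v ∈ B, u ≠ v → m ≤ G.dist u v := by
    have := (Finset.mem_filter.mp hBs).2
    exact this
  refine ⟨B, hBsep, ?_⟩
  intro v
  by_contra hcon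
  push_neg at hcon
  have hfar : ∀ b ∈ B, m ≤ G.dist b v := by
    intro b hb
    have := hcon b hb
    omega
  have hvB : v ∉ B := by
    intro hv
    have := hfar v hv
    simp [SimpleGraph.dist_self] at this
    omega
  have hins : insert v B ∈ s := by
    rw [hs, Finset.mem_filter]
    refine ⟨Finset.mem_univ _, ?_⟩
    intro a ha b hb hab
    rcases Finset.mem_insert.mp ha with rfl | ha' <;>
      rcases Finset.mem_insert.mp hb with rfl | hb'
    · exact absurd rfl hab
    · rw [SimpleGraph.dist_comm]; exact hfar b hb'
    · exact hfar a ha'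
    · exact hBsep a ha' b hb' hab
  have := hBmax _ hins
  rw [Finset.card_insert_of_notMem hvB] at this
  omega


lemma net_count (hconn : G.Connected) (hreg : G.IsRegularOfDegree d) (m : ℕ) (hm : 1 ≤ m) :
    ∃ B : Finset V, (∀ u ∈ B, ∀ v ∈ B, u ≠ v → m ≤ G.dist u v) ∧
      ((Fintype.card V : ℝ) ≤ (B.card : ℝ) * ((d:ℝ) + 1) ^ (m - 1)) := by
  obtain ⟨B, hBsep, hBcov⟩ := exists_net G hconn m hm
  refine ⟨B, hBsep, ?_⟩
  have hsub : (Finset.univ : Finset V) ⊆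
      B.biUnion (fun b => Finset.univ.filter (fun v => G.dist b v ≤ m - 1)) := by
    intro v _
    obtain ⟨b, hb, hbv⟩ := hBcov v
    exact Finset.mem_biUnion.mpr ⟨b, hb, Finset.mem_filter.mpr ⟨Finset.mem_univ _, hbv⟩⟩
  have h1 : Fintype.card V ≤
      ∑ b ∈ B, (Finset.univ.filter (fun v => G.dist b v ≤ m - 1)).card := by
    calc Fintype.card V = (Finset.univ : Finset V).card := (Finset.card_univ).symm
      _ ≤ (B.biUnion (fun b => Finset.univ.filter (fun v => G.dist b v ≤ m - 1))).card :=
          Finset.card_le_card hsub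
      _ ≤ ∑ b ∈ B, (Finset.univ.filter (fun v => G.dist b v ≤ m - 1)).card :=
          Finset.card_biUnion_le
  calc (Fintype.card V : ℝ)
      ≤ ((∑ b ∈ B, (Finset.univ.filter (fun v => G.dist b v ≤ m - 1)).card : ℕ) : ℝ) := by
        exact_mod_cast h1
    _ = ∑ b ∈ B, ((Finset.univ.filter (fun v => G.dist b v ≤ m - 1)).card : ℝ) := by
        push_cast; rfl
    _ ≤ ∑ _b ∈ B, ((d:ℝ) + 1) ^ (m - 1) := by
        apply Finset.sum_le_sum
        intro b _
        exact ball_card_le G hconn hreg (m-1) b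
    _ = (B.card : ℝ) * ((d:ℝ) + 1) ^ (m - 1) := by
        rw [Finset.sum_const, nsmul_eq_mul]

end Helpers

set_option maxHeartbeats 1000000 in
/-- Lower bound for the Ramsey problem on expanders: a `d`-regular graph on `n`
vertices with spectral gap `γ` contains a subset of size at least
`n^(1 - C·log d/(α·log(1/γ)))` which is `α`-equivalent to an equilateral space. -/
theorem expander_ramsey_lower :
    ∃ C : ℝ, 0 < C ∧
      ∀ (V : Type) [Fintype V] [DecidableEq V] (G : SimpleGraph V) [DecidableRel G.Adj]
        (d : ℕ) (γ : ℝ),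
        G.Connected → 3 ≤ d → G.IsRegularOfDegree d → 0 < γ → γ < 1 →
        HasAbsSpectralGap G d γ →
        ∀ α : ℝ, 1 < α →
          ∃ (B : Finset V) (r : ℝ), 0 < r ∧
            (Fintype.card V : ℝ) ^
              (1 - C * Real.log d / (α * Real.log (1 / γ))) ≤ (B.card : ℝ) ∧
            ∀ u ∈ B, ∀ v ∈ B, u ≠ v →
              r ≤ (G.dist u v : ℝ) ∧ (G.dist u v : ℝ) ≤ α * r := by
  refine ⟨100, by norm_num, ?_⟩
  intro V _ _ G _ d γ hconn hd hreg hγ0 hγ1 hgap α hα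
  have hne : Nonempty V := hconn.nonempty
  have hα0 : (0:ℝ) < α := by linarith
  set n : ℕ := Fintype.card V with hn
  have hn0 : (0:ℝ) < n := by exact_mod_cast Fintype.card_pos
  have hn1 : (1:ℝ) ≤ n := by exact_mod_cast Fintype.card_pos
  have hd1 : (1:ℝ) < d := by
    have : (3:ℝ) ≤ d := by exact_mod_cast hd
    linarith
  have hP : 0 < Real.log d := Real.log_pos hd1
  set L : ℝ := Real.log (1/γ) with hLdef
  have hlogγ : Real.log γ = -L := by
    rw [hLdef, one_div, Real.log_inv]; ring
  have hL : 0 < L := by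
    have : Real.log γ < 0 := Real.log_neg hγ0 hγ1
    linarith [hlogγ]
  set E : ℝ := 100 * Real.log d / (α * L) with hEdef
  have hE0 : 0 < E := by
    apply div_pos (by linarith) (by positivity)
  set T : ℝ := Real.log n / L with hTdef
  have hT0 : 0 ≤ T := div_nonneg (Real.log_nonneg hn1) hL.le
  set k : ℕ := Nat.floor T + 1 with hkdef
  have hk1 : 1 ≤ k := Nat.le_add_left 1 _
  have hTk : T < k := by
    rw [hkdef]
    push_cast
    exact Nat.lt_floor_add_one T
  have hγT : γ ^ (T:ℝ) = (n:ℝ)⁻¹ := by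
    rw [Real.rpow_def_of_pos hγ0, hlogγ]
    have : -L * T = -Real.log n := by
      rw [hTdef]; field_simp
    rw [this, Real.exp_neg, Real.exp_log hn0]
  have hγk : γ ^ k * (n:ℝ) < 1 := by
    have h1 : γ ^ (k:ℝ) < γ ^ (T:ℝ) :=
      Real.rpow_lt_rpow_of_exponent_gt hγ0 hγ1 hTk
    rw [Real.rpow_natCast, hγT] at h1
    calc γ ^ k * (n:ℝ) < (n:ℝ)⁻¹ * (n:ℝ) := mul_lt_mul_of_pos_right h1 hn0
      _ = 1 := inv_mul_cancel₀ hn0.ne'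
  have hdiam : ∀ u v : V, G.dist u v ≤ k :=
    dist_le_of_gap G hconn hreg hd hγ0 hgap k hγk
  clear_value n L E T k
  by_cases hcase : (k:ℝ) ≤ α
  · -- take B = univ, r = 1
    refine ⟨Finset.univ, 1, one_pos, ?_, ?_⟩
    · rw [Finset.card_univ, ← hn]
      calc (n:ℝ) ^ (1 - E) ≤ (n:ℝ) ^ (1:ℝ) :=
            Real.rpow_le_rpow_of_exponent_le hn1 (by linarith)
        _ = (n:ℝ) := Real.rpow_one _
    · intro u _ v _ huv
      constructor
      · have := hconn.pos_dist_of_ne huv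
        exact_mod_cast Nat.one_le_cast.mpr this
      · calc (G.dist u v : ℝ) ≤ k := by exact_mod_cast hdiam u v
          _ ≤ α := hcase
          _ = α * 1 := (mul_one α).symm
  · push_neg at hcase
    have hk2 : 2 ≤ k := by
      by_contra h
      have : k = 1 := by omega
      rw [this] at hcase
      push_cast at hcase
      linarith
    have hfloor1 : 1 ≤ Nat.floor T := by omega
    have hT1 : (1:ℝ) ≤ T := by
      have h1 := Nat.floor_le hT0
      have h2 : (1:ℝ) ≤ (Nat.floor T : ℝ) := by exact_mod_cast hfloor1
      linarith
    have hk2T : (k:ℝ) ≤ 2 * T := by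
      have h1 := Nat.floor_le hT0
      have h2 : (k:ℝ) = (⌊T⌋₊ : ℝ) + 1 := by exact_mod_cast hkdef
      linarith
    set m : ℕ := Nat.ceil ((k:ℝ)/α) with hmdef
    have hkα0 : (0:ℝ) < (k:ℝ)/α := by positivity
    have hm1 : 1 ≤ m := Nat.one_le_iff_ne_zero.mpr (by
      simp only [hmdef, ne_eq, Nat.ceil_eq_zero, not_le]
      exact hkα0)
    have hm0 : (0:ℝ) < m := by exact_mod_cast hm1
    have hkαm : (k:ℝ) ≤ α * m := by
      have h1 := Nat.le_ceil ((k:ℝ)/α)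
      rw [div_le_iff₀ hα0] at h1
      calc (k:ℝ) ≤ (Nat.ceil ((k:ℝ)/α) : ℝ) * α := h1
        _ = α * m := by rw [hmdef]; ring
    have hmk : (m:ℝ) - 1 < (k:ℝ)/α := by
      have := Nat.ceil_lt_add_one hkα0.le
      rw [← hmdef] at this
      linarith
    clear_value m
    obtain ⟨B, hBsep, hBcount⟩ := net_count G hconn hreg m hm1
    have hpow : ((d:ℝ) + 1) ^ (m - 1) ≤ (n:ℝ) ^ E := by
      have hd10 : (0:ℝ) < (d:ℝ) + 1 := by positivity
      rw [← Real.log_le_log_iff (by positivity) (Real.rpow_pos_of_pos hn0 E)]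
      rw [Real.log_pow, Real.log_rpow hn0]
      have hcast : ((m - 1 : ℕ) : ℝ) = (m:ℝ) - 1 := by
        push_cast [hm1]
        ring
      rw [hcast]
      -- (m-1) * log(d+1) ≤ E * log n
      have hb2 : Real.log ((d:ℝ) + 1) ≤ 2 * Real.log d := by
        have h1 : (d:ℝ) + 1 ≤ (d:ℝ)^2 := by
          have hd3 : (3:ℝ) ≤ d := by exact_mod_cast hd
          nlinarith
        calc Real.log ((d:ℝ) + 1) ≤ Real.log ((d:ℝ)^2) :=
              Real.log_le_log (by positivity) h1
          _ = 2 * Real.log d := by rw [Real.log_pow]; push_cast; ring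
      have hb0 : 0 < Real.log ((d:ℝ) + 1) := Real.log_pos (by linarith)
      have ha0 : (0:ℝ) ≤ (m:ℝ) - 1 := by linarith
      have haA : ((m:ℝ) - 1) * α ≤ (k:ℝ) := by
        have := hmk
        rw [lt_div_iff₀ hα0] at this
        linarith
      have hkL : (k:ℝ) * L ≤ 2 * Real.log n := by
        have h1 : (k:ℝ) * L ≤ 2 * T * L := by
          apply mul_le_mul_of_nonneg_right hk2T hL.le
        have h2 : T * L = Real.log n := by
          rw [hTdef]; field_simp
        calc (k:ℝ) * L ≤ 2 * T * L := h1
          _ = 2 * Real.log n := by rw [mul_assoc, h2]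
      rw [hEdef, div_mul_eq_mul_div, le_div_iff₀ (by positivity)]
      -- goal : (m-1) * log(d+1) * (α * L) ≤ 100 * log d * log n
      have step1 : ((m:ℝ) - 1) * Real.log ((d:ℝ)+1) * (α * L)
          ≤ ((m:ℝ) - 1) * (2 * Real.log d) * (α * L) := by
        apply mul_le_mul_of_nonneg_right _ (by positivity)
        exact mul_le_mul_of_nonneg_left hb2 ha0
      have step2 : ((m:ℝ) - 1) * (2 * Real.log d) * (α * L)
          = (((m:ℝ) - 1) * α) * L * (2 * Real.log d) := by ring
      have step3 : (((m:ℝ) - 1) * α) * L * (2 * Real.log d)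
          ≤ (k:ℝ) * L * (2 * Real.log d) := by
        apply mul_le_mul_of_nonneg_right _ (by positivity)
        exact mul_le_mul_of_nonneg_right haA hL.le
      have step4 : (k:ℝ) * L * (2 * Real.log d) ≤ (2 * Real.log n) * (2 * Real.log d) := by
        apply mul_le_mul_of_nonneg_right hkL (by positivity)
      have hN0 : 0 ≤ Real.log n := Real.log_nonneg hn1
      calc ((m:ℝ) - 1) * Real.log ((d:ℝ)+1) * (α * L)
          ≤ ((m:ℝ) - 1) * (2 * Real.log d) * (α * L) := step1
        _ = (((m:ℝ) - 1) * α) * L * (2 * Real.log d) := step2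
        _ ≤ (k:ℝ) * L * (2 * Real.log d) := step3
        _ ≤ (2 * Real.log n) * (2 * Real.log d) := step4
        _ ≤ 100 * Real.log d * Real.log n := by nlinarith [mul_nonneg hP.le hN0]
    refine ⟨B, m, hm0, ?_, ?_⟩
    · rw [← hn] at hBcount
      have hsplit : (n:ℝ) = (n:ℝ) ^ (1 - E) * (n:ℝ) ^ E := by
        rw [← Real.rpow_add hn0]
        norm_num
      have h2 : (n:ℝ) ^ (1 - E) * ((d:ℝ)+1) ^ (m-1) ≤ (n:ℝ) ^ (1 - E) * (n:ℝ) ^ E :=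
        mul_le_mul_of_nonneg_left hpow (Real.rpow_nonneg hn0.le _)
      have h3 : (n:ℝ) ^ (1 - E) * ((d:ℝ)+1) ^ (m-1) ≤ (B.card : ℝ) * ((d:ℝ)+1) ^ (m-1) := by
        calc (n:ℝ) ^ (1 - E) * ((d:ℝ)+1) ^ (m-1) ≤ (n:ℝ) ^ (1 - E) * (n:ℝ) ^ E := h2
          _ = (n:ℝ) := hsplit.symm
          _ ≤ (B.card : ℝ) * ((d:ℝ)+1) ^ (m-1) := hBcount
      exact le_of_mul_le_mul_right h3 (by positivity)
    · intro u hu v hv huv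
      have hsep := hBsep u hu v hv huv
      constructor
      · exact_mod_cast hsep
      · calc (G.dist u v : ℝ) ≤ k := by exact_mod_cast hdiam u v
          _ ≤ α * m := hkαm
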